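/- For every natural number p, every real h > 0, and every real polynomial f of degree at most p, one has f(0)² ≤ ((p+1)²/h) · ∫_0^h f(t)² dt, and likewise f(h)² ≤ ((p+1)²/h) · ∫_0^h f(t)² dt. -/

import Mathlib

open MeasureTheory

open Polynomial Finset

noncomputable section TraceAux

/-- `uP k = (X(X-1))^k`, the Rodrigues kernel on `[0,1]`. -/
def uP (k : ℕ) : ℝ[X] := X ^ k * (X - C 1) ^ k

/-- Unnormalized shifted Legendre polynomial. -/
def QP (k : ℕ) : ℝ[X] := derivative^[k] (uP k)

/-- Integral of a polynomial over `(0,1)`. -/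
def iiP (f : ℝ[X]) : ℝ := ∫ x in (0:ℝ)..1, f.eval x

lemma polyII (f : ℝ[X]) (a b : ℝ) :
    IntervalIntegrable (fun x => f.eval x) volume a b :=
  f.continuous.intervalIntegrable _ _

lemma iiP_add (f g : ℝ[X]) : iiP (f + g) = iiP f + iiP g := by
  simp only [iiP, eval_add]
  exact intervalIntegral.integral_add (polyII f 0 1) (polyII g 0 1)

lemma iiP_C_mul (a : ℝ) (f : ℝ[X]) : iiP (C a * f) = a * iiP f := by
  simp only [iiP, eval_mul, eval_C]
  exact intervalIntegral.integral_const_mul a _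

lemma iiP_sum {ι : Type*} (s : Finset ι) (F : ι → ℝ[X]) :
    iiP (∑ i ∈ s, F i) = ∑ i ∈ s, iiP (F i) := by
  classical
  induction s using Finset.induction with
  | empty => simp [iiP]
  | @insert _ _ h ih => rw [Finset.sum_insert h, iiP_add, ih, Finset.sum_insert h]

lemma iiP_deriv (f : ℝ[X]) : iiP (derivative f) = f.eval 1 - f.eval 0 := by
  exact intervalIntegral.integral_eq_sub_of_hasDerivAt
    (f := fun x => f.eval x) (f' := fun x => (derivative f).eval x)
    (fun x _ => f.hasDerivAt x) (polyII _ 0 1)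

/-- Integration by parts for polynomials on `[0,1]`. -/
lemma iiP_parts (u v : ℝ[X]) :
    iiP (derivative u * v) =
      u.eval 1 * v.eval 1 - u.eval 0 * v.eval 0 - iiP (u * derivative v) := by
  have h := iiP_deriv (u * v)
  rw [derivative_mul, iiP_add] at h
  simp only [eval_mul] at h
  linarith

end TraceAux

noncomputable section TraceAux2
open Polynomial

lemma uP_monic (k : ℕ) : (uP k).Monic := by
  exact (monic_X_pow k).mul ((monic_X_sub_C (1:ℝ)).pow k)

lemma uP_natDegree (k : ℕ) : (uP k).natDegree = 2 * k := by
  rw [uP, ((monic_X_pow k)).natDegree_mul ((monic_X_sub_C (1:ℝ)).pow k),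
    natDegree_X_pow]
  rw [natDegree_pow, natDegree_X_sub_C]
  ring

lemma eval_iter_uP_zero {k m : ℕ} (hm : m < k) :
    (derivative^[m] (uP k)).eval 0 = 0 := by
  rw [uP, Polynomial.iterate_derivative_mul, Polynomial.eval_finset_sum]
  apply Finset.sum_eq_zero
  intro i hi
  simp only [Finset.mem_range] at hi
  rw [Polynomial.iterate_derivative_X_pow_eq_C_mul]
  have h1 : k - (m - i) ≠ 0 := by omega
  simp [h1]

lemma eval_iter_uP_one {k m : ℕ} (hm : m < k) :
    (derivative^[m] (uP k)).eval 1 = 0 := by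
  rw [uP, Polynomial.iterate_derivative_mul, Polynomial.eval_finset_sum]
  apply Finset.sum_eq_zero
  intro i hi
  simp only [Finset.mem_range] at hi
  rw [Polynomial.iterate_derivative_X_sub_pow]
  have h1 : k - i ≠ 0 := by omega
  simp [h1]

lemma iiP_Q_mul (k : ℕ) (q : ℝ[X]) :
    ∀ m, m ≤ k → iiP (QP k * q) =
      (-1:ℝ)^m * iiP (derivative^[k-m] (uP k) * derivative^[m] q) := by
  intro m
  induction m with
  | zero => intro _; simp [QP]
  | succ m ih =>
    intro hm
    have hmk : m ≤ k := by omega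
    rw [ih hmk]
    have hstep : k - m = (k - (m+1)) + 1 := by omega
    have hd : derivative^[k-m] (uP k) = derivative (derivative^[k-(m+1)] (uP k)) := by
      rw [hstep, Function.iterate_succ_apply']
    rw [hd, iiP_parts]
    rw [eval_iter_uP_zero (by omega : k - (m+1) < k),
        eval_iter_uP_one (by omega : k - (m+1) < k)]
    rw [← Function.iterate_succ_apply' derivative m q]
    ring

lemma iiP_zero : iiP 0 = 0 := by simp [iiP]

lemma iiP_Q_orth {k : ℕ} {q : ℝ[X]} (hq : q.natDegree < k) :
    iiP (QP k * q) = 0 := by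
  rw [iiP_Q_mul k q k le_rfl, Polynomial.iterate_derivative_eq_zero hq]
  simp [iiP_zero]

lemma iter_deriv_uP_top (k : ℕ) :
    derivative^[2*k] (uP k) = C (((2*k).factorial : ℝ)) := by
  have hdeg : (derivative^[2*k] (uP k)).natDegree ≤ 0 := by
    refine (Polynomial.natDegree_iterate_derivative _ _).trans ?_
    rw [uP_natDegree]; omega
  rw [Polynomial.eq_C_of_natDegree_le_zero hdeg]
  rw [Polynomial.coeff_iterate_derivative]
  have : (uP k).coeff (0 + 2*k) = 1 := by
    rw [zero_add, ← uP_natDegree k]; exact (uP_monic k).coeff_natDegree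
  rw [this, zero_add, Nat.descFactorial_self]
  simp

end TraceAux2

noncomputable section TraceAux3
open Polynomial

lemma betaNat : ∀ (b a : ℕ), (∫ x in (0:ℝ)..1, x^a * (1-x)^b) =
    (a.factorial * b.factorial : ℝ) / (a+b+1).factorial := by
  intro b
  induction b with
  | zero =>
    intro a
    simp only [pow_zero, mul_one, Nat.factorial_zero, Nat.cast_one]
    rw [integral_pow]
    rw [Nat.add_zero, Nat.factorial_succ]
    push_cast
    rw [one_pow, zero_pow (by omega)]
    field_simp
    norm_num
  | succ b ih =>
    intro a
    have key : ∫ x in (0:ℝ)..1,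
        (((a:ℝ)+1) * (x^a * (1-x)^(b+1)) - ((b:ℝ)+1) * (x^(a+1) * (1-x)^b)) = 0 := by
      have hF : ∀ x ∈ Set.uIcc (0:ℝ) 1, HasDerivAt (fun x : ℝ => x^(a+1) * (1-x)^(b+1))
          (((a:ℝ)+1) * (x^a * (1-x)^(b+1)) - ((b:ℝ)+1) * (x^(a+1) * (1-x)^b)) x := by
        intro x _
        have h1 : HasDerivAt (fun x : ℝ => x^(a+1)) (((a:ℝ)+1) * x^a) x := by
          simpa using hasDerivAt_pow (a+1) x
        have h2 : HasDerivAt (fun x : ℝ => (1-x)^(b+1)) (-(((b:ℝ)+1) * (1-x)^b)) x := by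
          have h3 : HasDerivAt (fun x : ℝ => 1 - x) (-1) x := by
            simpa using (hasDerivAt_id x).const_sub 1
          have := h3.fun_pow (b+1)
          simpa [mul_comm] using this
        have := h1.fun_mul h2
        refine this.congr_deriv ?_
        push_cast
        ring
      have hcont : IntervalIntegrable (fun x : ℝ =>
          (((a:ℝ)+1) * (x^a * (1-x)^(b+1)) - ((b:ℝ)+1) * (x^(a+1) * (1-x)^b)))
          MeasureTheory.volume 0 1 := by
        apply Continuous.intervalIntegrable
        continuity
      rw [intervalIntegral.integral_eq_sub_of_hasDerivAt hF hcont]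
      norm_num
    have hInt1 : IntervalIntegrable (fun x : ℝ => x^a * (1-x)^(b+1))
        MeasureTheory.volume 0 1 := by
      apply Continuous.intervalIntegrable; continuity
    have hInt2 : IntervalIntegrable (fun x : ℝ => x^(a+1) * (1-x)^b)
        MeasureTheory.volume 0 1 := by
      apply Continuous.intervalIntegrable; continuity
    rw [intervalIntegral.integral_sub (hInt1.const_mul _) (hInt2.const_mul _),
      intervalIntegral.integral_const_mul, intervalIntegral.integral_const_mul,
      ih (a+1)] at key
    have ha1 : ((a:ℝ)+1) ≠ 0 := by positivity
    have : (∫ x in (0:ℝ)..1, x^a * (1-x)^(b+1)) =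
        (((b:ℝ)+1) * ((↑(a + 1).factorial * ↑b.factorial) / ↑(a + 1 + b + 1).factorial))
          / ((a:ℝ)+1) := by
      field_simp at key ⊢
      linarith
    rw [this]
    have e1 : (a + 1 + b + 1) = (a + (b+1) + 1) := by omega
    rw [e1, Nat.factorial_succ a, Nat.factorial_succ b]
    push_cast
    have hfac : ((a + (b+1) + 1).factorial : ℝ) ≠ 0 := by positivity
    field_simp

lemma iiP_uP (k : ℕ) :
    iiP (uP k) = (-1:ℝ)^k * ((k.factorial : ℝ)^2 / ((2*k+1).factorial)) := by
  have : iiP (uP k) = ∫ x in (0:ℝ)..1, (-1:ℝ)^k * (x^k * (1-x)^k) := by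
    unfold iiP uP
    congr 1
    funext x
    simp only [eval_mul, eval_pow, eval_X, eval_sub, eval_C, eval_one]
    have : (x - 1) ^ k = (-1:ℝ)^k * (1 - x)^k := by
      rw [← neg_pow, neg_sub]
    rw [this]; ring
  rw [this, intervalIntegral.integral_const_mul, betaNat k k]
  have : k + k + 1 = 2*k+1 := by omega
  rw [this]
  ring_nf

lemma iiP_Q_sq (k : ℕ) :
    iiP (QP k * QP k) = (k.factorial : ℝ)^2 / (2*(k:ℝ)+1) := by
  have h1 : iiP (QP k * QP k) = (-1:ℝ)^k * iiP (uP k * derivative^[k] (QP k)) := by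
    rw [iiP_Q_mul k (QP k) k le_rfl, Nat.sub_self, Function.iterate_zero_apply]
  have h2 : derivative^[k] (QP k) = C (((2*k).factorial : ℝ)) := by
    rw [QP, ← Function.iterate_add_apply]
    have : k + k = 2*k := by omega
    rw [this, iter_deriv_uP_top]
  rw [h1, h2, mul_comm (uP k), iiP_C_mul, iiP_uP]
  have hf : ((2*k+1).factorial : ℝ) = (2*(k:ℝ)+1) * ((2*k).factorial : ℝ) := by
    rw [Nat.factorial_succ]
    push_cast
    ring
  rw [hf]
  have h2k : ((2*k).factorial : ℝ) ≠ 0 := by positivity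
  have h2k1 : (2*(k:ℝ)+1) ≠ 0 := by positivity
  have hneg : (-1:ℝ)^k * (-1:ℝ)^k = 1 := by
    rw [← pow_add]
    exact Even.neg_one_pow ⟨k, rfl⟩
  calc (-1:ℝ)^k * (((2*k).factorial : ℝ) *
        ((-1:ℝ)^k * ((k.factorial : ℝ)^2 / ((2*(k:ℝ)+1) * ((2*k).factorial : ℝ)))))
      = ((-1:ℝ)^k * (-1:ℝ)^k) * (((2*k).factorial : ℝ) *
        ((k.factorial : ℝ)^2 / ((2*(k:ℝ)+1) * ((2*k).factorial : ℝ)))) := by ring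
    _ = (k.factorial : ℝ)^2 / (2*(k:ℝ)+1) := by
        rw [hneg, one_mul]
        field_simp

end TraceAux3

noncomputable section TraceAux4
open Polynomial

lemma QP_natDegree_le (k : ℕ) : (QP k).natDegree ≤ k := by
  refine (Polynomial.natDegree_iterate_derivative _ _).trans ?_
  rw [uP_natDegree]; omega

lemma QP_coeff_self (k : ℕ) : (QP k).coeff k = ((2*k).descFactorial k : ℝ) := by
  rw [QP, Polynomial.coeff_iterate_derivative]
  have h1 : k + k = 2*k := by omega
  rw [h1]
  have : (uP k).coeff (2*k) = 1 := by
    rw [← uP_natDegree k]; exact (uP_monic k).coeff_natDegree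
  rw [this]
  simp

lemma QP_eval_one (k : ℕ) : (QP k).eval 1 = (k.factorial : ℝ) := by
  rw [QP, uP, Polynomial.iterate_derivative_mul, Polynomial.eval_finset_sum]
  rw [Finset.sum_eq_single_of_mem k (Finset.self_mem_range_succ k)]
  · rw [Nat.sub_self, Function.iterate_zero_apply, Nat.choose_self,
      Polynomial.iterate_derivative_X_sub_pow_self]
    simp
  · intro i hi hik
    simp only [Finset.mem_range] at hi
    rw [Polynomial.iterate_derivative_X_sub_pow]
    have h1 : k - i ≠ 0 := by omega
    simp [h1]

lemma QP_eval_zero (k : ℕ) : (QP k).eval 0 = (-1:ℝ)^k * (k.factorial : ℝ) := by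
  rw [QP, uP, Polynomial.iterate_derivative_mul, Polynomial.eval_finset_sum]
  rw [Finset.sum_eq_single_of_mem 0 (Finset.mem_range.2 (by omega))]
  · rw [Function.iterate_zero_apply, Nat.choose_zero_right, Nat.sub_zero,
      Polynomial.iterate_derivative_X_pow_eq_C_mul, Nat.sub_self,
      Nat.descFactorial_self]
    simp [mul_comm]
  · intro i hi hik
    simp only [Finset.mem_range] at hi
    rw [Polynomial.iterate_derivative_X_pow_eq_C_mul]
    have h1 : k - (k - i) = i := by omega
    rw [h1]
    simp [hik]

lemma poly_eq_zero_of_iiP_sq (g : ℝ[X]) (h : iiP (g*g) = 0) : g = 0 := by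
  by_contra hg
  have hroots : Set.Finite { x | g.IsRoot x } := Polynomial.finite_setOf_isRoot hg
  set f : ℝ → ℝ := fun x => (g.eval x)^2 with hf
  have hint : MeasureTheory.IntegrableOn f (Set.Ioc (0:ℝ) 1) MeasureTheory.volume := by
    apply Continuous.integrableOn_Ioc
    exact (g.continuous).pow 2
  have h0 : ∫ x in Set.Ioc (0:ℝ) 1, f x = 0 := by
    have : iiP (g * g) = ∫ x in Set.Ioc (0:ℝ) 1, f x := by
      rw [iiP, intervalIntegral.integral_of_le (by norm_num : (0:ℝ) ≤ 1)]
      congr 1; funext x; simp [hf, eval_mul, sq]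
    rw [← this, h]
  have hae : f =ᵐ[MeasureTheory.volume.restrict (Set.Ioc (0:ℝ) 1)] 0 := by
    rw [← MeasureTheory.integral_eq_zero_iff_of_nonneg (fun x => sq_nonneg _) hint]
    exact h0
  have hmeas : MeasurableSet {x : ℝ | f x ≠ 0} := by
    apply (isOpen_ne_fun ((g.continuous).pow 2) continuous_const).measurableSet
  have hzero : MeasureTheory.volume ({x : ℝ | f x ≠ 0} ∩ Set.Ioc (0:ℝ) 1) = 0 := by
    have h2 := MeasureTheory.ae_iff.1 hae
    simp only [Pi.zero_apply] at h2
    rwa [MeasureTheory.Measure.restrict_apply hmeas] at h2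
  have hsub : Set.Ioc (0:ℝ) 1 ⊆ { x | g.IsRoot x } ∪ ({x : ℝ | f x ≠ 0} ∩ Set.Ioc (0:ℝ) 1) := by
    intro x hx
    by_cases hfx : f x = 0
    · left
      have : g.eval x = 0 := by
        have := sq_eq_zero_iff.mp hfx
        exact this
      exact this
    · right; exact ⟨hfx, hx⟩
  have hle := (MeasureTheory.measure_mono hsub).trans (MeasureTheory.measure_union_le (μ := MeasureTheory.volume) _ _)
  rw [hroots.measure_zero MeasureTheory.volume, hzero, add_zero] at hle
  rw [Real.volume_Ioc] at hle
  norm_num at hle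

end TraceAux4

noncomputable section TraceAux5
open Polynomial

lemma iiP_mul_X_pow_zero (p : ℕ) (g : ℝ[X]) (hg : g.natDegree ≤ p)
    (horth : ∀ k ≤ p, iiP (g * QP k) = 0) :
    ∀ j, j ≤ p → iiP (g * X ^ j) = 0 := by
  intro j
  induction j using Nat.strong_induction_on with
  | _ j IH =>
    intro hj
    set lc : ℝ := ((2*j).descFactorial j : ℝ) with hlc_def
    have hlc : lc ≠ 0 := by
      have h1 : (2*j).descFactorial j ≠ 0 := by
        rw [Ne, Nat.descFactorial_eq_zero_iff_lt]
        omega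
      simpa [hlc_def] using h1
    set r : ℝ[X] := QP j - C lc * X ^ j with hr_def
    have hrcoeff : r.coeff j = 0 := by
      rw [hr_def, Polynomial.coeff_sub, QP_coeff_self, Polynomial.coeff_C_mul,
        Polynomial.coeff_X_pow, if_pos rfl]
      simp [hlc_def]
    have hrdeg : r.natDegree ≤ j := by
      refine (Polynomial.natDegree_sub_le _ _).trans ?_
      simp only [sup_le_iff, max_le_iff]
      constructor
      · exact QP_natDegree_le j
      · exact (Polynomial.natDegree_C_mul_le _ _).trans (by simp)
    have hrsum : r = ∑ i ∈ Finset.range j, C (r.coeff i) * X ^ i := by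
      by_cases hr0 : r = 0
      · rw [hr0]
        symm
        apply Finset.sum_eq_zero
        intro i _
        simp
      · have hlt : r.natDegree < j := by
          rcases lt_or_eq_of_le hrdeg with h | h
          · exact h
          · exfalso
            exact hr0 (Polynomial.leadingCoeff_eq_zero.1 (by rwa [Polynomial.leadingCoeff, h]))
        have := r.as_sum_range' j hlt
        simpa [← Polynomial.C_mul_X_pow_eq_monomial] using this
    have hgr : iiP (g * r) = 0 := by
      have : g * r = ∑ i ∈ Finset.range j, C (r.coeff i) * (g * X ^ i) := by
        conv_lhs => rw [hrsum]
        rw [Finset.mul_sum]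
        apply Finset.sum_congr rfl
        intro i _
        ring
      rw [this, iiP_sum]
      apply Finset.sum_eq_zero
      intro i hi
      simp only [Finset.mem_range] at hi
      rw [iiP_C_mul, IH i hi (by omega), mul_zero]
    have hsplit : g * QP j = C lc * (g * X ^ j) + g * r := by
      rw [hr_def]; ring
    have h0 := horth j hj
    rw [hsplit, iiP_add, iiP_C_mul, hgr, add_zero] at h0
    exact (mul_eq_zero.1 h0).resolve_left hlc

lemma orth_eq_zero (p : ℕ) (g : ℝ[X]) (hg : g.natDegree ≤ p)
    (horth : ∀ k ≤ p, iiP (g * QP k) = 0) : g = 0 := by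
  have hX := iiP_mul_X_pow_zero p g hg horth
  apply poly_eq_zero_of_iiP_sq
  have hsum : g = ∑ j ∈ Finset.range (p+1), C (g.coeff j) * X ^ j := by
    have := g.as_sum_range' (p+1) (by omega)
    simpa [← Polynomial.C_mul_X_pow_eq_monomial] using this
  have : g * g = ∑ j ∈ Finset.range (p+1), C (g.coeff j) * (g * X ^ j) := by
    nth_rewrite 1 [hsum]
    rw [Finset.sum_mul]
    apply Finset.sum_congr rfl
    intro j _
    ring
  rw [this, iiP_sum]
  apply Finset.sum_eq_zero
  intro j hj
  simp only [Finset.mem_range] at hj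
  rw [iiP_C_mul, hX j (by omega), mul_zero]

end TraceAux5

noncomputable section TraceAux6
open Polynomial

lemma iiP_sub (f g : ℝ[X]) : iiP (f - g) = iiP f - iiP g := by
  have := iiP_add (f - g) g
  simp only [sub_add_cancel] at this
  linarith

lemma sum_odd_sq (n : ℕ) : ∑ k ∈ Finset.range n, (2*(k:ℝ)+1) = (n:ℝ)^2 := by
  induction n with
  | zero => simp
  | succ n ih =>
    rw [Finset.sum_range_succ, ih]
    push_cast
    ring

theorem unit_trace (p : ℕ) (f : ℝ[X]) (hf : f.natDegree ≤ p) :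
    (f.eval 0)^2 ≤ ((p:ℝ)+1)^2 * iiP (f*f) ∧
    (f.eval 1)^2 ≤ ((p:ℝ)+1)^2 * iiP (f*f) := by
  classical
  set N : ℕ → ℝ := fun k => (k.factorial : ℝ)^2 / (2*(k:ℝ)+1) with hN_def
  have hNpos : ∀ k, 0 < N k := by
    intro k
    have h1 : (0:ℝ) < (k.factorial : ℝ)^2 := by positivity
    have h2 : (0:ℝ) < 2*(k:ℝ)+1 := by positivity
    exact div_pos h1 h2
  set b : ℕ → ℝ := fun k => iiP (f * QP k) / N k with hb_def
  have hfQ : ∀ k, iiP (f * QP k) = b k * N k := by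
    intro k
    rw [hb_def]
    field_simp
    rw [mul_div_cancel_right₀ _ (hNpos k).ne']
  set S : ℝ[X] := ∑ k ∈ Finset.range (p+1), C (b k) * QP k with hS_def
  have hQQ : ∀ j k : ℕ, j ≠ k → iiP (QP k * QP j) = 0 := by
    intro j k hjk
    rcases lt_or_gt_of_ne hjk with h | h
    · exact iiP_Q_orth ((QP_natDegree_le j).trans_lt h)
    · rw [mul_comm]
      exact iiP_Q_orth ((QP_natDegree_le k).trans_lt h)
  have hSQ : ∀ j ≤ p, iiP (S * QP j) = b j * N j := by
    intro j hj
    rw [hS_def, Finset.sum_mul, iiP_sum]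
    rw [Finset.sum_eq_single_of_mem j (Finset.mem_range.2 (by omega))]
    · rw [mul_assoc, iiP_C_mul, iiP_Q_sq]
    · intro k _ hk
      rw [mul_assoc, iiP_C_mul, hQQ j k hk.symm, mul_zero]
  have hg : f - S = 0 := by
    apply orth_eq_zero p
    · refine (Polynomial.natDegree_sub_le _ _).trans ?_
      simp only [max_le_iff]
      refine ⟨hf, ?_⟩
      apply Polynomial.natDegree_sum_le_of_forall_le
      intro k hk
      simp only [Finset.mem_range] at hk
      exact (Polynomial.natDegree_C_mul_le _ _).trans ((QP_natDegree_le k).trans (by omega))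
    · intro k hk
      rw [sub_mul, iiP_sub, hfQ k, hSQ k hk, sub_self]
  have hfS : f = S := sub_eq_zero.1 hg
  have hiiP : iiP (f * f) = ∑ k ∈ Finset.range (p+1), (b k)^2 * N k := by
    nth_rewrite 2 [hfS]
    rw [hS_def, Finset.mul_sum]
    rw [Finset.sum_congr rfl (fun k _ => by ring :
      ∀ k ∈ Finset.range (p+1), f * (C (b k) * QP k) = C (b k) * (f * QP k)), iiP_sum]
    apply Finset.sum_congr rfl
    intro k _
    rw [iiP_C_mul, hfQ k]
    ring
  have hev1 : f.eval 1 = ∑ k ∈ Finset.range (p+1), (1:ℝ)^k * (b k * (k.factorial : ℝ)) := by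
    conv_lhs => rw [hfS]
    rw [hS_def, Polynomial.eval_finset_sum]
    apply Finset.sum_congr rfl
    intro k _
    rw [Polynomial.eval_mul, Polynomial.eval_C, QP_eval_one]
    simp
  have hev0 : f.eval 0 = ∑ k ∈ Finset.range (p+1), (-1:ℝ)^k * (b k * (k.factorial : ℝ)) := by
    conv_lhs => rw [hfS]
    rw [hS_def, Polynomial.eval_finset_sum]
    apply Finset.sum_congr rfl
    intro k _
    rw [Polynomial.eval_mul, Polynomial.eval_C, QP_eval_zero]
    ring
  have key : ∀ ε : ℕ → ℝ, (∀ k, (ε k)^2 = 1) →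
      (∑ k ∈ Finset.range (p+1), ε k * (b k * (k.factorial : ℝ)))^2 ≤
        ((p:ℝ)+1)^2 * ∑ k ∈ Finset.range (p+1), (b k)^2 * N k := by
    intro ε hε
    have hcs := Finset.sum_sq_le_sum_mul_sum_of_sq_eq_mul (Finset.range (p+1))
      (r := fun k => ε k * (b k * (k.factorial : ℝ)))
      (f := fun k => 2*(k:ℝ)+1) (g := fun k => (b k)^2 * N k)
      (fun i _ => by positivity)
      (fun i _ => mul_nonneg (sq_nonneg _) (hNpos i).le)
      (fun i _ => by
        have h2 : (2*(i:ℝ)+1) ≠ 0 := by positivity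
        rw [hN_def]
        field_simp
        rw [hε i]
        ring)
    rw [sum_odd_sq (p+1)] at hcs
    have : (((p+1 : ℕ) : ℝ))^2 = ((p:ℝ)+1)^2 := by push_cast; ring
    rwa [this] at hcs
  constructor
  · rw [hev0, hiiP]
    exact key (fun k => (-1:ℝ)^k) (fun k => by
      rw [← pow_mul, mul_comm, pow_mul]
      simp)
  · rw [hev1, hiiP]
    exact key (fun k => (1:ℝ)^k) (fun k => by simp)

end TraceAux6


/-- One-dimensional case of the sharp polynomial trace inequality of Lemma 3.8:
for every polynomial `f` of degree at most `p` and every `h > 0`,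
`f(0)² ≤ ((p+1)²/h) ∫_0^h f(t)² dt` and `f(h)² ≤ ((p+1)²/h) ∫_0^h f(t)² dt`,
where the integral is the Lebesgue integral over `(0, h)`. -/
theorem stmt6 (p : ℕ) (h : ℝ) (hh : 0 < h) (f : Polynomial ℝ)
    (hf : f.natDegree ≤ p) :
    (f.eval 0) ^ 2 ≤
        (((p : ℝ) + 1) ^ 2 / h) * ∫ t in Set.Ioo (0 : ℝ) h, (f.eval t) ^ 2 ∧
      (f.eval h) ^ 2 ≤
        (((p : ℝ) + 1) ^ 2 / h) * ∫ t in Set.Ioo (0 : ℝ) h, (f.eval t) ^ 2 := by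
  set F : ℝ[X] := f.comp (C h * X) with hF_def
  have hFdeg : F.natDegree ≤ p := by
    rw [hF_def, Polynomial.natDegree_comp, Polynomial.natDegree_C_mul_X _ (ne_of_gt hh),
      mul_one]
    exact hf
  have hFeval : ∀ x : ℝ, F.eval x = f.eval (h * x) := by
    intro x
    simp [hF_def, Polynomial.eval_comp]
  have hchg : (∫ t in Set.Ioo (0:ℝ) h, (f.eval t)^2) = h * iiP (F * F) := by
    rw [← MeasureTheory.integral_Ioc_eq_integral_Ioo,
      ← intervalIntegral.integral_of_le hh.le]
    have h1 : iiP (F*F) = ∫ x in (0:ℝ)..1, (fun t => (f.eval t)^2) (h * x) := by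
      unfold iiP
      congr 1
      funext x
      rw [Polynomial.eval_mul, hFeval]
      simp [sq]
    rw [h1, intervalIntegral.integral_comp_mul_left (fun t => (f.eval t)^2) (ne_of_gt hh)]
    rw [mul_zero, mul_one, smul_eq_mul, ← mul_assoc, mul_inv_cancel₀ (ne_of_gt hh), one_mul]
  obtain ⟨h0, h1⟩ := unit_trace p F hFdeg
  have hrhs : (((p : ℝ) + 1) ^ 2 / h) * ∫ t in Set.Ioo (0 : ℝ) h, (f.eval t) ^ 2
      = ((p:ℝ)+1)^2 * iiP (F * F) := by
    rw [hchg]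
    field_simp
  constructor
  · have he : f.eval 0 = F.eval 0 := by rw [hFeval]; norm_num
    rw [he, hrhs]
    exact h0
  · have he : f.eval h = F.eval 1 := by rw [hFeval]; norm_num
    rw [he, hrhs]
    exact h1
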